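/- Let Z be a symmetric positive definite 6×6 matrix, J > 0 a real number, and ξ a 3×3 invertible real matrix with entries ξ_{kj}. Define the 3×3 matrices N_{ij} = J·Σ_{l,k=1}^{3} ξ_{li} O_lᵀ Z O_k ξ_{kj}, where O_l are the 6×3 selection matrices of the elastic Voigt formalism. Then N_{ii} is symmetric positive definite for each i, and N_{ij} = N_{ji}ᵀ for all i, j. -/

import Mathlib

open Matrix

/-- The Voigt selection matrices `O₁, O₂, O₃` (given by their transposes). -/
def voigtO : Fin 3 → Matrix (Fin 6) (Fin 3) ℝ
  | 0 => (!![1,0,0,0,0,0; 0,0,0,0,0,1; 0,0,0,0,1,0] : Matrix (Fin 3) (Fin 6) ℝ)ᵀ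
  | 1 => (!![0,0,0,0,0,1; 0,1,0,0,0,0; 0,0,0,1,0,0] : Matrix (Fin 3) (Fin 6) ℝ)ᵀ
  | 2 => (!![0,0,0,0,1,0; 0,0,0,1,0,0; 0,0,1,0,0,0] : Matrix (Fin 3) (Fin 6) ℝ)ᵀ

lemma vec6_five {α : Type*} (x : α) (u : Fin 5 → α) :
    Matrix.vecCons x u (5 : Fin 6) = u 4 := rfl

lemma voigt_comb (c : Fin 3 → ℝ) :
    (∑ l : Fin 3, c l • voigtO l) =
      !![c 0, 0, 0; 0, c 1, 0; 0, 0, c 2; 0, c 2, c 1; c 2, 0, c 0; c 1, c 0, 0] := by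
  ext i j
  rw [Matrix.sum_apply, Fin.sum_univ_three]
  fin_cases i <;> fin_cases j <;>
    simp [voigtO, Matrix.vecHead, Matrix.vecTail, vec6_five]

lemma voigt_comb_mulVec_ne_zero (c : Fin 3 → ℝ) (hc : c ≠ 0)
    (x : Fin 3 → ℝ) (hx : x ≠ 0) :
    (∑ l : Fin 3, c l • voigtO l) *ᵥ x ≠ 0 := by
  rw [voigt_comb]
  intro h
  have e0 := congrFun h 0
  have e1 := congrFun h 1
  have e2 := congrFun h 2
  have e3 := congrFun h 3
  have e4 := congrFun h 4
  have e5 := congrFun h 5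
  simp [Matrix.mulVec, dotProduct, Fin.sum_univ_three, vec6_five, Matrix.vecHead, Matrix.vecTail] at e0 e1 e2 e3 e4 e5
  obtain ⟨l, hl⟩ := Function.ne_iff.mp hc
  apply hx
  funext j
  fin_cases l <;> simp only at hl
  · have hx0 : x 0 = 0 := by
      rcases e0 with h' | h' <;> tauto
    have hx1 : x 1 = 0 := by
      rw [hx0, mul_zero, zero_add] at e5
      rcases mul_eq_zero.mp e5 with h' | h' <;> tauto
    have hx2 : x 2 = 0 := by
      rw [hx0, mul_zero, zero_add] at e4
      rcases mul_eq_zero.mp e4 with h' | h' <;> tauto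
    fin_cases j <;> assumption
  · have hx1 : x 1 = 0 := by
      rcases e1 with h' | h' <;> tauto
    have hx0 : x 0 = 0 := by
      rw [hx1, mul_zero, add_zero] at e5
      rcases mul_eq_zero.mp e5 with h' | h' <;> tauto
    have hx2 : x 2 = 0 := by
      rw [hx1, mul_zero, zero_add] at e3
      rcases mul_eq_zero.mp e3 with h' | h' <;> tauto
    fin_cases j <;> assumption
  · have hx2 : x 2 = 0 := by
      rcases e2 with h' | h' <;> tauto
    have hx0 : x 0 = 0 := by
      rw [hx2, mul_zero, add_zero] at e4
      rcases mul_eq_zero.mp e4 with h' | h' <;> tauto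
    have hx1 : x 1 = 0 := by
      rw [hx2, mul_zero, add_zero] at e3
      rcases mul_eq_zero.mp e3 with h' | h' <;> tauto
    fin_cases j <;> assumption

theorem stmt_5 (Z : Matrix (Fin 6) (Fin 6) ℝ) (hZ : Z.PosDef)
    (J : ℝ) (hJ : 0 < J)
    (ξ : Matrix (Fin 3) (Fin 3) ℝ) (hξ : IsUnit ξ)
    (N : Fin 3 → Fin 3 → Matrix (Fin 3) (Fin 3) ℝ)
    (hN : ∀ i j, N i j =
      J • ∑ l : Fin 3, ∑ k : Fin 3, (ξ l i * ξ k j) • ((voigtO l)ᵀ * Z * voigtO k)) :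
    (∀ i, (N i i).PosDef) ∧ (∀ i j, N i j = (N j i)ᵀ) := by
  set M : Fin 3 → Matrix (Fin 6) (Fin 3) ℝ := fun i => ∑ l : Fin 3, ξ l i • voigtO l with hM
  have hfact : ∀ i j, N i j = J • ((M i)ᵀ * Z * M j) := by
    intro i j
    rw [hN i j, hM]
    congr 1
    simp only [Matrix.transpose_sum, Matrix.transpose_smul]
    rw [Matrix.sum_mul, Matrix.sum_mul]
    refine Finset.sum_congr rfl fun l _ => ?_
    rw [Matrix.mul_sum]
    refine Finset.sum_congr rfl fun k _ => ?_
    rw [Matrix.smul_mul, Matrix.smul_mul, Matrix.mul_smul, smul_smul]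
  have hZsymm : Zᵀ = Z := hZ.1
  have hsymm : ∀ i j, N i j = (N j i)ᵀ := by
    intro i j
    rw [hfact i j, hfact j i]
    rw [Matrix.transpose_smul, Matrix.transpose_mul, Matrix.transpose_mul,
      Matrix.transpose_transpose, hZsymm, Matrix.mul_assoc]
  refine ⟨?_, hsymm⟩
  intro i
  rw [Matrix.posDef_iff_dotProduct_mulVec]
  constructor
  · show (N i i)ᴴ = N i i
    rw [Matrix.conjTranspose_eq_transpose_of_trivial]
    exact (hsymm i i).symm
  · intro x hx
    have hcol : (fun l => ξ l i) ≠ 0 := by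
      intro h0
      have hdet : ξ.det = 0 := Matrix.det_eq_zero_of_column_eq_zero i (fun l => congrFun h0 l)
      have := (Matrix.isUnit_iff_isUnit_det ξ).mp hξ
      rw [hdet] at this
      exact this.ne_zero rfl
    have hMx : M i *ᵥ x ≠ 0 := voigt_comb_mulVec_ne_zero _ hcol x hx
    have key : x ⬝ᵥ (N i i) *ᵥ x = J * ((M i *ᵥ x) ⬝ᵥ Z *ᵥ (M i *ᵥ x)) := by
      rw [hfact i i, Matrix.smul_mulVec, dotProduct_smul]
      congr 1
      rw [← Matrix.mulVec_mulVec, ← Matrix.mulVec_mulVec, dotProduct_mulVec,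
        Matrix.vecMul_transpose]
    have hZpos := hZ.dotProduct_mulVec_pos hMx
    simp only [star_trivial] at hZpos ⊢
    rw [key]
    exact mul_pos hJ hZpos
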